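/- Let U ⊆ ℝ² be a bounded open set, and let gₙ : U → ℝ² be 1-Lipschitz maps converging uniformly to a map g, such that λ(gₙ(U)) ≥ λ(U) - 1/n for each n ≥ 1. Then λ(g(U)) = λ(U). -/

import Mathlib

open MeasureTheory Metric Set ENNReal

lemma lip_image_vol_le {f : EuclideanSpace ℝ (Fin 2) → EuclideanSpace ℝ (Fin 2)}
    {s : Set (EuclideanSpace ℝ (Fin 2))} (hf : LipschitzOnWith 1 f s) :
    volume (f '' s) ≤ volume s := by
  haveI hH : Measure.IsAddHaarMeasure (μH[2] : Measure (EuclideanSpace ℝ (Fin 2))) := by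
    have h := isAddHaarMeasure_hausdorffMeasure (E := EuclideanSpace ℝ (Fin 2))
    simpa [finrank_euclideanSpace_fin] using h
  have him : (μH[2] : Measure (EuclideanSpace ℝ (Fin 2))) (f '' s) ≤ μH[2] s := by
    have := hf.hausdorffMeasure_image_le (by norm_num : (0:ℝ) ≤ 2)
    simpa using this
  have hc := Measure.isAddLeftInvariant_eq_smul (μH[2] : Measure (EuclideanSpace ℝ (Fin 2))) volume
  set c := Measure.addHaarScalarFactor (μH[2] : Measure (EuclideanSpace ℝ (Fin 2))) volume with hcdef
  have hcpos : 0 < c := Measure.addHaarScalarFactor_pos_of_isAddHaarMeasure _ _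
  rw [hc] at him
  simp only [Measure.smul_apply, smul_eq_mul] at him
  exact (ENNReal.mul_le_mul_iff_right (by exact_mod_cast hcpos.ne') ENNReal.coe_ne_top).mp him

theorem stmt5 (U : Set (EuclideanSpace ℝ (Fin 2))) (hUb : Bornology.IsBounded U) (hUo : IsOpen U)
    (gs : ℕ → EuclideanSpace ℝ (Fin 2) → EuclideanSpace ℝ (Fin 2))
    (g : EuclideanSpace ℝ (Fin 2) → EuclideanSpace ℝ (Fin 2))
    (hlip : ∀ n, ∀ x ∈ U, ∀ y ∈ U, dist (gs n x) (gs n y) ≤ dist x y)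
    (hconv : TendstoUniformlyOn gs g Filter.atTop U)
    (hmeas : ∀ n : ℕ, 1 ≤ n → volume (gs n '' U) ≥ volume U - 1 / (n : ℝ≥0∞)) :
    volume (g '' U) = volume U := by
  have hUfin : volume U ≠ ∞ := hUb.measure_lt_top.ne
  -- each gs n is 1-Lipschitz on U
  have hgslip : ∀ n, LipschitzOnWith 1 (gs n) U := fun n => by
    rw [lipschitzOnWith_iff_dist_le_mul]
    intro x hx y hy
    simpa using hlip n x hx y hy
  -- g is 1-Lipschitz on U
  have hglip : LipschitzOnWith 1 g U := by
    rw [lipschitzOnWith_iff_dist_le_mul]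
    intro x hx y hy
    have h1 : Filter.Tendsto (fun n => dist (gs n x) (gs n y)) Filter.atTop
        (nhds (dist (g x) (g y))) :=
      (hconv.tendsto_at hx).dist (hconv.tendsto_at hy)
    have := le_of_tendsto h1 (Filter.Eventually.of_forall fun n => hlip n x hx y hy)
    simpa using this
  -- upper bound
  have hupper : volume (g '' U) ≤ volume U := lip_image_vol_le hglip
  refine le_antisymm hupper ?_
  -- lower bound
  refine le_trans (le_of_eq rfl) ?_
  refine ENNReal.le_of_forall_pos_le_add fun ε hε _ => ?_
  set ε3 : ℝ≥0∞ := (ε : ℝ≥0∞) / 3 with hε3def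
  have hε3pos : 0 < ε3 := ENNReal.div_pos (by exact_mod_cast hε.ne') (by norm_num)
  -- inner regularity: compact K ⊆ U
  obtain ⟨K, hKU, hKc, hKvol⟩ :=
    hUo.measurableSet.exists_isCompact_lt_add (μ := volume) hUfin hε3pos.ne'
  have hKfin : volume K ≠ ∞ := (lt_of_le_of_lt (measure_mono hKU) hUfin.lt_top).ne
  have hdiff : volume (U \ K) ≤ ε3 := by
    rw [measure_diff hKU hKc.measurableSet.nullMeasurableSet hKfin]
    exact tsub_le_iff_left.mpr hKvol.le
  -- g '' K is compact
  have hgK : IsCompact (g '' K) := hKc.image_of_continuousOn (hglip.continuousOn.mono hKU)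
  have hgKfin : volume (g '' K) ≠ ∞ := hgK.measure_lt_top.ne
  -- choose δ > 0 with volume (cthickening δ (g '' K)) < volume (g '' K) + ε3
  have htend : Filter.Tendsto (fun r => volume (cthickening r (g '' K)))
      (nhdsWithin 0 (Ioi 0)) (nhds (volume (g '' K))) := by
    refine (tendsto_measure_cthickening_of_isClosed ⟨1, one_pos, ?_⟩ hgK.isClosed).mono_left
      nhdsWithin_le_nhds
    exact (hgK.cthickening).measure_lt_top.ne
  have hlt : volume (g '' K) < volume (g '' K) + ε3 :=
    ENNReal.lt_add_right hgKfin hε3pos.ne'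
  obtain ⟨δ, hδlt, hδpos⟩ := ((htend.eventually_lt_const hlt).and self_mem_nhdsWithin).exists
  have hδpos' : (0:ℝ) < δ := hδpos
  -- choose n
  have huconv := (Metric.tendstoUniformlyOn_iff.mp hconv) δ hδpos'
  have hinv : ∀ᶠ n : ℕ in Filter.atTop, (1 / (n : ℝ≥0∞)) < ε3 := by
    have := ENNReal.tendsto_inv_nat_nhds_zero.eventually_lt_const hε3pos
    simpa [one_div] using this
  obtain ⟨n, hn1, hnd, hninv⟩ :=
    ((Filter.eventually_atTop.mpr ⟨1, fun m hm => hm⟩).and (huconv.and hinv)).exists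
  have step0 : volume U ≤ volume (gs n '' U) + 1 / (n : ℝ≥0∞) :=
    tsub_le_iff_right.mp (hmeas n hn1)
  have himg : gs n '' U ⊆ (gs n '' K) ∪ (gs n '' (U \ K)) := by
    rw [← image_union]
    refine image_mono fun x hx => ?_
    rcases em (x ∈ K) with h | h
    · exact Or.inl h
    · exact Or.inr ⟨hx, h⟩
  have hsub1 : gs n '' K ⊆ cthickening δ (g '' K) := by
    rintro _ ⟨x, hx, rfl⟩
    refine mem_cthickening_of_dist_le _ (g x) δ _ (mem_image_of_mem g hx) ?_
    have := hnd x (hKU hx)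
    rw [dist_comm] at this
    exact this.le
  have step1 : volume (gs n '' U) ≤ volume (cthickening δ (g '' K)) + volume (U \ K) :=
    calc volume (gs n '' U) ≤ volume ((gs n '' K) ∪ (gs n '' (U \ K))) := measure_mono himg
    _ ≤ volume (gs n '' K) + volume (gs n '' (U \ K)) := measure_union_le _ _
    _ ≤ _ := add_le_add (measure_mono hsub1) (lip_image_vol_le ((hgslip n).mono diff_subset))
  have h3 : ε3 + ε3 + ε3 = (ε : ℝ≥0∞) := by
    have h33 : ε3 + ε3 + ε3 = 3 * ε3 := by ring
    rw [h33, hε3def, ENNReal.mul_div_cancel' (by norm_num) (by norm_num)]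
  calc volume U ≤ volume (gs n '' U) + 1 / (n : ℝ≥0∞) := step0
  _ ≤ (volume (cthickening δ (g '' K)) + volume (U \ K)) + 1 / (n : ℝ≥0∞) :=
      add_le_add_left step1 _
  _ ≤ ((volume (g '' K) + ε3) + ε3) + ε3 := add_le_add (add_le_add hδlt.le hdiff) hninv.le
  _ = volume (g '' K) + (ε3 + ε3 + ε3) := by ring
  _ ≤ volume (g '' U) + ε := by
      rw [h3]
      exact add_le_add_left (measure_mono (image_mono hKU)) _
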